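/- Every conflict-free edge coloring of the complete graph K_n requires at least Ω(log n) colors; more precisely, if x = ⌊log₂ n − log₂ log₂ n − 1⌋ ≥ 1, then no edge coloring of K_n with x colors is conflict-free. Equivalently, the conflict-free chromatic number of the line graph of K_n is at least Ω(log n). -/

import Mathlib

lemma cf_numeric_bound (n x : ℕ) (hn : 2 ≤ n)
    (hx : (x : ℤ) = ⌊Real.logb 2 n - Real.logb 2 (Real.logb 2 n) - 1⌋)
    (hx1 : 1 ≤ x) : 2 ^ x * (x + 1) < n := by
  set L := Real.logb 2 n with hL
  have hn2 : (2:ℝ) ≤ n := by exact_mod_cast hn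
  have hnpos : (0:ℝ) < n := by linarith
  have hL1 : (1:ℝ) ≤ L := by
    rw [hL, show (1:ℝ) = Real.logb 2 2 from (Real.logb_self_eq_one (by norm_num)).symm]
    exact (Real.logb_le_logb (by norm_num) (by norm_num) hnpos).mpr hn2
  have hfl : (x:ℝ) ≤ L - Real.logb 2 L - 1 := by
    have h := Int.floor_le (L - Real.logb 2 L - 1)
    rw [← hx] at h
    exact_mod_cast h
  have hx1' : (1:ℝ) ≤ (x:ℝ) := by exact_mod_cast hx1
  have hlogL0 : (0:ℝ) ≤ Real.logb 2 L := Real.logb_nonneg (by norm_num) hL1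
  have hL2 : (2:ℝ) ≤ L := by linarith
  have hLpos : (0:ℝ) < L := by linarith
  have hlogL1 : (1:ℝ) ≤ Real.logb 2 L := by
    rw [show (1:ℝ) = Real.logb 2 2 from (Real.logb_self_eq_one (by norm_num)).symm]
    exact (Real.logb_le_logb (by norm_num) (by norm_num) hLpos).mpr hL2
  have h2L : (2:ℝ) ^ L = n := Real.rpow_logb (by norm_num) (by norm_num) hnpos
  have h2logL : (2:ℝ) ^ (Real.logb 2 L) = L := Real.rpow_logb (by norm_num) (by norm_num) hLpos
  have hpow : (2:ℝ) ^ (x:ℕ) ≤ n / (2 * L) := by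
    rw [← Real.rpow_natCast 2 x]
    have h2 : (2:ℝ) ^ ((x:ℕ):ℝ) ≤ (2:ℝ) ^ (L - Real.logb 2 L - 1) :=
      Real.rpow_le_rpow_of_exponent_le (by norm_num) hfl
    have h3 : (2:ℝ) ^ (L - Real.logb 2 L - 1) = n / (2 * L) := by
      rw [show L - Real.logb 2 L - 1 = L - (Real.logb 2 L + 1) by ring,
        Real.rpow_sub (by norm_num), Real.rpow_add (by norm_num), h2L, h2logL,
        Real.rpow_one]
      ring
    linarith
  have hx1L : (x:ℝ) + 1 ≤ L := by linarith
  have hmul : (2:ℝ) ^ (x:ℕ) * ((x:ℝ) + 1) ≤ (n / (2 * L)) * L := by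
    apply mul_le_mul hpow hx1L (by positivity) (by positivity)
  have hfin : (n / (2 * L)) * L = n / 2 := by field_simp
  have hlt : (2:ℝ) ^ (x:ℕ) * ((x:ℝ) + 1) < n := by
    rw [hfin] at hmul; linarith
  have : ((2 ^ x * (x + 1) : ℕ) : ℝ) < (n:ℝ) := by push_cast; linarith
  exact_mod_cast this

/-- If `x = ⌊log₂ n − log₂ log₂ n − 1⌋ ≥ 1`, then no edge coloring of `K_n` with `x`
colors is conflict-free: some edge sees no uniquely occurring color in its closed
edge-neighborhood.  Hence conflict-free edge colorings of `K_n` need `Ω(log n)` colors. -/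
theorem completeGraph_conflict_free_lower_bound (n : ℕ) (hn : 2 ≤ n) (x : ℕ)
    (hx : (x : ℤ) = ⌊Real.logb 2 n - Real.logb 2 (Real.logb 2 n) - 1⌋)
    (hx1 : 1 ≤ x) :
    ∀ f : (⊤ : SimpleGraph (Fin n)).edgeSet → Fin x,
      ∃ e : (⊤ : SimpleGraph (Fin n)).edgeSet, ¬ ∃ c : Fin x,
        ∃! e' : (⊤ : SimpleGraph (Fin n)).edgeSet,
          (∃ w : Fin n, w ∈ (e : Sym2 (Fin n)) ∧ w ∈ (e' : Sym2 (Fin n))) ∧ f e' = c := by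
  have hxn : 2 ^ x * (x + 1) < n := cf_numeric_bound n x hn hx hx1
  classical
  intro f
  by_contra hcon
  push_neg at hcon
  -- hcon : ∀ e, ∃ c, ∃! e', (...)
  -- edge constructor
  have hmem : ∀ u v : Fin n, u ≠ v → s(u, v) ∈ (⊤ : SimpleGraph (Fin n)).edgeSet := by
    intro u v huv
    rw [SimpleGraph.mem_edgeSet, SimpleGraph.top_adj]
    exact huv
  let E : ∀ (u v : Fin n), u ≠ v → (⊤ : SimpleGraph (Fin n)).edgeSet := fun u v h => ⟨s(u, v), hmem u v h⟩
  -- palettes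
  let pal : Fin n → Finset (Fin x) := fun v =>
    Finset.univ.filter (fun c => ∃ e : (⊤ : SimpleGraph (Fin n)).edgeSet, v ∈ (e : Sym2 (Fin n)) ∧ f e = c)
  have hcard : (Finset.univ : Finset (Finset (Fin x))).card * (x + 1)
      < (Finset.univ : Finset (Fin n)).card := by
    simpa [Finset.card_univ] using hxn
  obtain ⟨B, -, hB⟩ := Finset.exists_lt_card_fiber_of_mul_lt_card_of_maps_to
      (f := pal) (fun v _ => Finset.mem_univ (pal v)) hcard
  set A := Finset.univ.filter (fun v => pal v = B) with hA
  have hpalA : ∀ v ∈ A, pal v = B := fun v hv => (Finset.mem_filter.mp hv).2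
  -- key: for an edge inside A, it is the unique edge meeting it with its own color
  have key : ∀ (u v : Fin n) (huv : u ≠ v), u ∈ A → v ∈ A →
      ∀ e' : (⊤ : SimpleGraph (Fin n)).edgeSet,
        ((∃ w : Fin n, w ∈ (s(u,v) : Sym2 (Fin n)) ∧ w ∈ (e' : Sym2 (Fin n))) ∧
          f e' = f (E u v huv)) → e' = E u v huv := by
    intro u v huv hu hv
    obtain ⟨c, e₀, he₀, huniq⟩ := hcon (E u v huv)
    -- show c ∈ B
    have hcB : c ∈ B := by
      obtain ⟨⟨w, hw1, hw2⟩, hfc⟩ := he₀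
      have hw : w = u ∨ w = v := by
        simpa [E] using hw1
      rcases hw with rfl | rfl
      · rw [← hpalA w hu]
        simp only [pal, Finset.mem_filter, Finset.mem_univ, true_and]
        exact ⟨e₀, hw2, hfc⟩
      · rw [← hpalA w hv]
        simp only [pal, Finset.mem_filter, Finset.mem_univ, true_and]
        exact ⟨e₀, hw2, hfc⟩
    -- c ∈ pal u : get edge at u with color c
    have hcu : ∃ g : (⊤ : SimpleGraph (Fin n)).edgeSet, u ∈ (g : Sym2 (Fin n)) ∧ f g = c := by
      have := hcB; rw [← hpalA u hu] at this
      simpa [pal] using this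
    have hcv : ∃ g : (⊤ : SimpleGraph (Fin n)).edgeSet, v ∈ (g : Sym2 (Fin n)) ∧ f g = c := by
      have := hcB; rw [← hpalA v hv] at this
      simpa [pal] using this
    obtain ⟨g, hgu, hgc⟩ := hcu
    obtain ⟨h, hhv, hhc⟩ := hcv
    have hge : g = e₀ := huniq g ⟨⟨u, by simp [E], hgu⟩, hgc⟩
    have hhe : h = e₀ := huniq h ⟨⟨v, by simp [E], hhv⟩, hhc⟩
    have hue : u ∈ (e₀ : Sym2 (Fin n)) := hge ▸ hgu
    have hve : v ∈ (e₀ : Sym2 (Fin n)) := hhe ▸ hhv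
    have he0 : e₀ = E u v huv := by
      apply Subtype.ext
      exact (Sym2.mem_and_mem_iff huv).mp ⟨hue, hve⟩
    have hfc : f (E u v huv) = c := by
      rw [← he0]; exact he₀.2
    intro e' he'
    rw [he0] at huniq
    exact huniq e' ⟨he'.1, by rw [he'.2, hfc]⟩
  -- A is big
  have hA2 : x + 2 ≤ A.card := hB
  have hAne : A.Nonempty := Finset.card_pos.mp (by omega)
  obtain ⟨u, hu⟩ := hAne
  -- the coloring map on A.erase u
  let c0 : Fin x := ⟨0, hx1⟩
  let g : Fin n → Fin x := fun v => if h : u ≠ v then f (E u v h) else c0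
  have hinj : Set.InjOn g (A.erase u) := by
    intro v hv w hw hvw
    have hvA := Finset.mem_of_mem_erase hv
    have hwA := Finset.mem_of_mem_erase hw
    have huv : u ≠ v := fun h => (Finset.ne_of_mem_erase hv) h.symm
    have huw : u ≠ w := fun h => (Finset.ne_of_mem_erase hw) h.symm
    simp only [g, dif_pos huv, dif_pos huw] at hvw
    by_contra hne
    have := key u v huv hu hvA (E u w huw)
      ⟨⟨u, by simp, by simp [E]⟩, hvw.symm⟩
    have : s(u, w) = s(u, v) := congrArg Subtype.val this
    exact hne (Sym2.congr_right.mp this).symm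
  have hle : (A.erase u).card ≤ x := by
    have := Finset.card_le_card_of_injOn g (fun v _ => Finset.mem_univ (g v)) hinj
    simpa using this
  have : A.card - 1 ≤ x := by
    rwa [Finset.card_erase_of_mem hu] at hle
  omega
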